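/- Let G be a nilpotent group and K an upper-finite normal subgroup of G. Then for every m ≥ 1, the iterated commutator subgroup [K, G, …, G] (m copies of G) is upper-finite. -/

import Mathlib

/-- A group is upper-finite if every finitely generated quotient of it is finite. -/
def UpperFinite (G : Type*) [Group G] : Prop :=
  ∀ (N : Subgroup G) [N.Normal], Group.FG (G ⧸ N) → Finite (G ⧸ N)

/-- The iterated commutator subgroup `[K, ^m G]`: `[K, ^0 G] = K`,
`[K, ^{m+1} G] = [[K, ^m G], G]`. -/
def iterCommutator {G : Type*} [Group G] (K : Subgroup G) : ℕ → Subgroup G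
  | 0 => K
  | m + 1 => ⁅iterCommutator K m, (⊤ : Subgroup G)⁆

theorem UpperFinite.of_surjective {G H : Type*} [Group G] [Group H]
    (hG : UpperFinite G) (f : G →* H) (hf : Function.Surjective f) : UpperFinite H := by
  intro N _ hfg
  let g : G →* H ⧸ N := (QuotientGroup.mk' N).comp f
  have hg : Function.Surjective g := (QuotientGroup.mk'_surjective N).comp hf
  have e := QuotientGroup.quotientKerEquivOfSurjective g hg
  have : Group.FG (G ⧸ g.ker) := Group.fg_of_surjective (f := e.symm.toMonoidHom) e.symm.surjective
  have := hG g.ker this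
  exact Finite.of_equiv _ e.toEquiv

theorem UpperFinite.of_mulEquiv {G H : Type*} [Group G] [Group H]
    (e : G ≃* H) (hG : UpperFinite G) : UpperFinite H :=
  hG.of_surjective e.toMonoidHom e.surjective

theorem UpperFinite.of_finite {G : Type*} [Group G] [Finite G] : UpperFinite G := by
  intro N _ _; exact Quotient.finite _

theorem UpperFinite.finite_of_fg {G : Type*} [Group G] (hG : UpperFinite G)
    (hfg : Group.FG G) : Finite G := by
  have : Group.FG (G ⧸ (⊥ : Subgroup G)) :=
    Group.fg_of_surjective (QuotientGroup.mk'_surjective ⊥)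
  have := hG ⊥ this
  exact Finite.of_equiv (G ⧸ (⊥ : Subgroup G)) (QuotientGroup.quotientBot (G := G)).toEquiv

theorem UpperFinite.extension {H : Type*} [Group H] (A : Subgroup H) [A.Normal]
    (hA : UpperFinite A) (hQ : UpperFinite (H ⧸ A)) : UpperFinite H := by
  intro N _ hfg
  set π := QuotientGroup.mk' N with hπ
  set Abar : Subgroup (H ⧸ N) := A.map π with hAbar
  haveI hAbarn : Abar.Normal := Subgroup.Normal.map ‹A.Normal› π (QuotientGroup.mk'_surjective N)
  -- top quotient finite
  have hker : A ≤ ((QuotientGroup.mk' Abar).comp π).ker := by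
    intro a ha
    simp only [MonoidHom.mem_ker, MonoidHom.comp_apply, QuotientGroup.mk'_apply,
      QuotientGroup.eq_one_iff]
    exact Subgroup.mem_map_of_mem π ha
  let f : H ⧸ A →* (H ⧸ N) ⧸ Abar := QuotientGroup.lift A ((QuotientGroup.mk' Abar).comp π) hker
  have hfsurj : Function.Surjective f := by
    intro x
    obtain ⟨y, rfl⟩ := QuotientGroup.mk'_surjective Abar x
    obtain ⟨z, rfl⟩ := QuotientGroup.mk'_surjective N y
    exact ⟨QuotientGroup.mk z, rfl⟩
  have htopfin : Finite ((H ⧸ N) ⧸ Abar) :=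
    (hQ.of_surjective f hfsurj).finite_of_fg
      (Group.fg_of_surjective (f := QuotientGroup.mk' Abar) (QuotientGroup.mk'_surjective Abar))
  -- Abar finite
  haveI : Subgroup.FiniteIndex Abar := Abar.finiteIndex_of_finite_quotient
  haveI : Group.FG (H ⧸ N) := hfg
  haveI hAbarfg : Group.FG Abar := Subgroup.fg_of_index_ne_zero Abar
  have hAbarfin : Finite Abar :=
    (hA.of_surjective (π.subgroupMap A) (MonoidHom.subgroupMap_surjective π A)).finite_of_fg hAbarfg
  exact Finite.of_equiv _ (Subgroup.groupEquivQuotientProdSubgroup (s := Abar)).symm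

/-- An infinite f.g. commutative group surjects onto ℤ. -/
theorem exists_surjective_int {B : Type*} [CommGroup B] (hfg : Group.FG B)
    (hinf : Infinite B) : ∃ ψ : B →* Multiplicative ℤ, Function.Surjective ψ := by
  haveI : AddGroup.FG (Additive B) := AddGroup.fg_iff_mul_fg.mpr hfg
  obtain ⟨n, ι, fι, p, hp, e, ⟨eq⟩⟩ := AddCommGroup.equiv_free_prod_directSum_zmod (Additive B)
  haveI : Infinite (Additive B) := Infinite.of_injective Additive.ofMul fun _ _ h => h
  cases n with
  | zero =>
    haveI : Finite (Fin 0 →₀ ℤ) := by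
      haveI : Subsingleton (Fin 0 →₀ ℤ) := ⟨fun a b => by ext i; exact absurd i.2 (by omega)⟩
      infer_instance
    haveI : ∀ i, NeZero (p i ^ e i) := fun i => ⟨pow_ne_zero _ (hp i).pos.ne'⟩
    haveI : Finite (DirectSum ι fun i => ZMod (p i ^ e i)) :=
      Finite.of_equiv _ DFinsupp.equivFunOnFintype.symm
    haveI : Finite (Additive B) := Finite.of_equiv _ eq.symm.toEquiv
    exact (not_finite (Additive B)).elim
  | succ k =>
    let g : Additive B →+ ℤ :=
      ((Finsupp.applyAddHom (0 : Fin (k+1))).comp (AddMonoidHom.fst _ _)).comp eq.toAddMonoidHom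
    have hg : Function.Surjective g := by
      intro z
      obtain ⟨x, hx⟩ := eq.surjective (Finsupp.single (0 : Fin (k+1)) z, 0)
      exact ⟨x, by simp [g, hx]⟩
    refine ⟨MonoidHom.mk' (fun b => Multiplicative.ofAdd (g (Additive.ofMul b))) ?_, ?_⟩
    · intro a b; simp [map_add]
    · intro z; obtain ⟨x, hx⟩ := hg z.toAdd; exact ⟨x.toMul, by simp [hx]⟩

/-- A hom from an upper-finite group to ℤ is trivial. -/
theorem hom_to_int_trivial {A : Type*} [Group A] (hA : UpperFinite A)
    (χ : A →* Multiplicative ℤ) : χ = 1 := by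
  haveI : IsCyclic (Multiplicative ℤ) := by infer_instance
  haveI : IsCyclic χ.range := by infer_instance
  have hfgr : Group.FG χ.range := by
    obtain ⟨g, hg⟩ := IsCyclic.exists_generator (α := χ.range)
    exact Group.fg_iff.mpr ⟨{g}, by
      rw [← Subgroup.zpowers_eq_closure]
      exact (Subgroup.eq_top_iff' _).mpr hg, Set.finite_singleton g⟩
  have hfin : Finite χ.range :=
    ((hA.of_surjective χ.rangeRestrict χ.rangeRestrict_surjective)).finite_of_fg hfgr
  ext a
  have hx : IsOfFinOrder (⟨χ a, MonoidHom.mem_range.mpr ⟨a, rfl⟩⟩ : χ.range) := isOfFinOrder_of_finite _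
  have hfo : IsOfFinOrder (χ a) := by
    obtain ⟨k, hk, hk1⟩ := (isOfFinOrder_iff_pow_eq_one).mp hx
    exact isOfFinOrder_iff_pow_eq_one.mpr ⟨k, hk, congrArg Subtype.val hk1⟩
  obtain ⟨k, hk, hk1⟩ := isOfFinOrder_iff_pow_eq_one.mp hfo
  have : k • (χ a).toAdd = 0 := by
    have := congrArg Multiplicative.toAdd hk1
    simpa using this
  have : (χ a).toAdd = 0 := by
    have hk' : (k : ℤ) ≠ 0 := Int.natCast_ne_zero.mpr (by omega)
    exact (smul_eq_zero_iff_right (by exact_mod_cast hk')).mp (by exact_mod_cast this)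
  simp only [MonoidHom.one_apply]
  simpa using this

/-- If B (comm) is generated by images of homs from an upper-finite group, B is upper-finite. -/
theorem upperFinite_of_gen_by_images {A B : Type*} [Group A] [Group B]
    (hcomm : ∀ x y : B, x * y = y * x)
    (hA : UpperFinite A) (F : Set (A →* B))
    (hgen : Subgroup.closure (⋃ f ∈ F, Set.range f) = ⊤) : UpperFinite B := by
  letI : CommGroup B := { ‹Group B› with mul_comm := hcomm }
  intro N _ hfg
  by_contra hfin
  haveI hinf : Infinite (B ⧸ N) := not_finite_iff_infinite.mp hfin
  obtain ⟨ψ, hψ⟩ := exists_surjective_int hfg hinf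
  have hcomp : ∀ f ∈ F, ψ.comp ((QuotientGroup.mk' N).comp f) = 1 := fun f hf =>
    hom_to_int_trivial hA _
  have htriv : ∀ b : B, ψ (QuotientGroup.mk' N b) = 1 := by
    intro b
    have hb : b ∈ Subgroup.closure (⋃ f ∈ F, Set.range f) := hgen ▸ Subgroup.mem_top b
    refine Subgroup.closure_induction ?_ ?_ ?_ ?_ hb
    · rintro x hx
      simp only [Set.mem_iUnion] at hx
      obtain ⟨f, hf, a, rfl⟩ := hx
      exact congrArg (fun φ => φ a) (hcomp f hf)
    · simp
    · intro x y _ _ hx hy; rw [map_mul, map_mul, hx, hy, mul_one]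
    · intro x _ hx; rw [map_inv, map_inv, hx, inv_one]
  obtain ⟨x, hx⟩ := hψ (Multiplicative.ofAdd 1)
  obtain ⟨b, rfl⟩ := QuotientGroup.mk'_surjective N x
  rw [htriv b] at hx
  simpa using congrArg Multiplicative.toAdd hx

open scoped commutatorElement in
open Subgroup in
theorem quot_step {G : Type*} [Group G] (P : Subgroup G) [P.Normal]
    (hA : UpperFinite (↥P ⧸ (⁅P, (⊤ : Subgroup G)⁆.subgroupOf P))) :
    UpperFinite (↥(⁅P, (⊤ : Subgroup G)⁆) ⧸
      (⁅⁅P, (⊤ : Subgroup G)⁆, (⊤ : Subgroup G)⁆.subgroupOf ⁅P, (⊤ : Subgroup G)⁆)) := by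
  set Q : Subgroup G := ⁅P, (⊤ : Subgroup G)⁆ with hQdef
  set R : Subgroup G := ⁅Q, (⊤ : Subgroup G)⁆ with hRdef
  haveI hQn : Q.Normal := Subgroup.commutator_normal P ⊤
  haveI hRn : R.Normal := Subgroup.commutator_normal Q ⊤
  -- commutativity of the target
  have hcomm : ∀ a b : ↥Q ⧸ R.subgroupOf Q, a * b = b * a := by
    intro a b
    induction a using QuotientGroup.induction_on with | _ u => ?_
    induction b using QuotientGroup.induction_on with | _ v => ?_
    rw [← QuotientGroup.mk_mul, ← QuotientGroup.mk_mul, QuotientGroup.eq, mem_subgroupOf]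
    push_cast
    have h1 : (((u : G) * v)⁻¹ * ((v : G) * u) : G) = ⁅(v : G)⁻¹, (u : G)⁻¹⁆ := by group
    rw [h1]
    exact commutator_mem_commutator (Q.inv_mem v.2) (mem_top _)
  have hQmem : ∀ (x : ↥P) (g : G), ⁅(x : G), g⁆ ∈ Q := fun x g =>
    commutator_mem_commutator x.2 (mem_top g)
  -- the G-level membership computation
  have aux : ∀ (x y g : G), x ∈ P → y ∈ P →
      ⁅x * y, g⁆⁻¹ * (⁅x, g⁆ * ⁅y, g⁆) ∈ R := by
    intro x y g hx hy
    have hyg : ⁅y, g⁆ ∈ Q := commutator_mem_commutator hy (mem_top g)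
    have hc : ⁅x, ⁅y, g⁆⁆ ∈ R := by
      have := R.inv_mem (commutator_mem_commutator hyg (mem_top x))
      rwa [commutatorElement_inv] at this
    have hd : ⁅⁅y, g⁆⁻¹, ⁅x, g⁆⁻¹⁆ ∈ R :=
      commutator_mem_commutator (Q.inv_mem hyg) (mem_top _)
    have key : ⁅x * y, g⁆⁻¹ * (⁅x, g⁆ * ⁅y, g⁆)
        = ⁅⁅y, g⁆⁻¹, ⁅x, g⁆⁻¹⁆⁻¹ *
          ((⁅x, g⁆ * ⁅y, g⁆)⁻¹ * ⁅x, ⁅y, g⁆⁆⁻¹ * (⁅x, g⁆ * ⁅y, g⁆)) := by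
      group
    rw [key]
    refine mul_mem (R.inv_mem hd) ?_
    have := (Subgroup.Normal.conj_mem hRn _ (R.inv_mem hc) (⁅x, g⁆ * ⁅y, g⁆)⁻¹)
    simpa using this
  -- the homomorphisms
  let f : G → (↥P →* ↥Q ⧸ R.subgroupOf Q) := fun g =>
    MonoidHom.mk' (fun x => QuotientGroup.mk (⟨⁅(x : G), g⁆, hQmem x g⟩ : ↥Q))
      (by
        intro a b
        rw [← QuotientGroup.mk_mul, QuotientGroup.eq, mem_subgroupOf]
        push_cast
        exact aux a b g a.2 b.2)
  have hkill : ∀ g : G, ∀ x ∈ Q.subgroupOf P, f g x = 1 := by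
    intro g x hx
    show QuotientGroup.mk (⟨⁅(x : G), g⁆, hQmem x g⟩ : ↥Q) = 1
    rw [QuotientGroup.eq_one_iff, mem_subgroupOf]
    exact commutator_mem_commutator (mem_subgroupOf.mp hx) (mem_top g)
  let φ : G → (↥P ⧸ Q.subgroupOf P →* ↥Q ⧸ R.subgroupOf Q) := fun g =>
    QuotientGroup.lift _ (f g) (hkill g)
  -- generation
  have hgen : Subgroup.closure (⋃ ψ ∈ Set.range φ, Set.range ψ) = ⊤ := by
    rw [eq_top_iff]
    rintro q -
    induction q using QuotientGroup.induction_on with | _ z => ?_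
    set T := Subgroup.closure (⋃ ψ ∈ Set.range φ, Set.range ψ) with hT
    have hs : Subgroup.closure {x | ∃ g₁ ∈ P, ∃ g₂ ∈ (⊤ : Subgroup G), ⁅g₁, g₂⁆ = x} = Q :=
      (Subgroup.commutator_def P ⊤).symm
    suffices h : ∀ (y : G) (hy : y ∈ Q), QuotientGroup.mk (⟨y, hy⟩ : ↥Q) ∈ T by
      exact h z.1 z.2
    intro y hy
    have hy' : y ∈ Subgroup.closure {x | ∃ g₁ ∈ P, ∃ g₂ ∈ (⊤ : Subgroup G), ⁅g₁, g₂⁆ = x} := by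
      rw [hs]; exact hy
    refine Subgroup.closure_induction
      (p := fun w _ => ∀ hw : w ∈ Q, QuotientGroup.mk (⟨w, hw⟩ : ↥Q) ∈ T) ?_ ?_ ?_ ?_ hy' hy
    · rintro w ⟨p, hp, g, -, rfl⟩ hw
      have heq : φ g (QuotientGroup.mk (⟨p, hp⟩ : ↥P)) = QuotientGroup.mk (⟨⁅p, g⁆, hw⟩ : ↥Q) :=
        rfl
      exact Subgroup.subset_closure
        (Set.mem_iUnion₂.mpr ⟨φ g, ⟨g, rfl⟩, ⟨QuotientGroup.mk (⟨p, hp⟩ : ↥P), heq⟩⟩)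
    · intro h1
      have : (⟨(1 : G), h1⟩ : ↥Q) = 1 := rfl
      rw [this]
      simpa using T.one_mem
    · intro a b ha hb iha ihb hab
      have haQ : a ∈ Q := by rw [← hs]; exact ha
      have hbQ : b ∈ Q := by rw [← hs]; exact hb
      have : (QuotientGroup.mk (⟨a * b, hab⟩ : ↥Q) : ↥Q ⧸ R.subgroupOf Q)
          = QuotientGroup.mk (⟨a, haQ⟩ : ↥Q) * QuotientGroup.mk (⟨b, hbQ⟩ : ↥Q) := by
        rw [← QuotientGroup.mk_mul (N := R.subgroupOf Q)]
        exact congrArg QuotientGroup.mk (Subtype.ext rfl)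
      rw [this]
      exact mul_mem (iha haQ) (ihb hbQ)
    · intro a ha iha hainv
      have haQ : a ∈ Q := by rw [← hs]; exact ha
      have : (QuotientGroup.mk (⟨a⁻¹, hainv⟩ : ↥Q) : ↥Q ⧸ R.subgroupOf Q)
          = (QuotientGroup.mk (⟨a, haQ⟩ : ↥Q))⁻¹ := by
        rw [← QuotientGroup.mk_inv (N := R.subgroupOf Q)]
        exact congrArg QuotientGroup.mk (Subtype.ext rfl)
      rw [this]
      exact inv_mem (iha haQ)
  exact upperFinite_of_gen_by_images hcomm hA (Set.range φ) hgen


section Assembly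

variable {G : Type*} [Group G] (K : Subgroup G) [K.Normal]

instance iterCommutator_normal (m : ℕ) : (iterCommutator K m).Normal := by
  induction m with
  | zero => exact ‹K.Normal›
  | succ n ih =>
    haveI := ih
    show (⁅iterCommutator K n, (⊤ : Subgroup G)⁆).Normal
    infer_instance

theorem iterCommutator_succ_le (m : ℕ) : iterCommutator K (m + 1) ≤ iterCommutator K m := by
  haveI := iterCommutator_normal K m
  show ⁅iterCommutator K m, (⊤ : Subgroup G)⁆ ≤ iterCommutator K m
  exact Subgroup.commutator_le_left _ _

theorem iterCommutator_le_lcs (m : ℕ) : iterCommutator K m ≤ Subgroup.lowerCentralSeries (⊤ : Subgroup G) m := by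
  induction m with
  | zero => exact le_top
  | succ n ih =>
    rw [Subgroup.lowerCentralSeries_succ]
    exact Subgroup.commutator_mono ih le_rfl

theorem iterCommutator_quot_upperFinite (hK : UpperFinite K) (j : ℕ) :
    UpperFinite (↥(iterCommutator K j) ⧸
      ((iterCommutator K (j + 1)).subgroupOf (iterCommutator K j))) := by
  induction j with
  | zero =>
    haveI := (iterCommutator_normal K (0 + 1)).subgroupOf (iterCommutator K 0)
    exact UpperFinite.of_surjective (G := ↥(iterCommutator K 0)) hK (QuotientGroup.mk' _) (QuotientGroup.mk'_surjective _)
  | succ n ih => exact quot_step (iterCommutator K n) ih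

theorem iterCommutator_ext_step (j : ℕ)
    (h1 : UpperFinite (iterCommutator K (j + 1)))
    (h2 : UpperFinite (↥(iterCommutator K j) ⧸
      ((iterCommutator K (j + 1)).subgroupOf (iterCommutator K j)))) :
    UpperFinite (iterCommutator K j) :=
  UpperFinite.extension ((iterCommutator K (j + 1)).subgroupOf (iterCommutator K j))
    (UpperFinite.of_mulEquiv (Subgroup.subgroupOfEquivOfLe (iterCommutator_succ_le K j)).symm h1)
    h2

end Assembly

/-- if `K` is an upper-finite normal subgroup of a nilpotent group `G`,
then `[K, ^m G]` is upper-finite for every `m ≥ 1`. -/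
theorem stmt_15 (G : Type) [Group G] (hnil : Group.IsNilpotent G)
    (K : Subgroup G) [K.Normal] (hK : UpperFinite K)
    (m : ℕ) (hm : 1 ≤ m) :
    UpperFinite (iterCommutator K m) := by
  obtain ⟨n, hn⟩ := nilpotent_iff_lowerCentralSeries.mp hnil
  have hbot : iterCommutator K n = ⊥ := le_bot_iff.mp (hn ▸ iterCommutator_le_lcs K n)
  haveI : Finite (↥(⊥ : Subgroup G)) := by
    haveI : Subsingleton (↥(⊥ : Subgroup G)) :=
      ⟨fun a b => Subtype.ext (a.2.trans b.2.symm)⟩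
    infer_instance
  have main : ∀ i, UpperFinite (iterCommutator K (n - i)) := by
    intro i
    induction i with
    | zero =>
      rw [Nat.sub_zero, hbot]
      exact UpperFinite.of_finite
    | succ i ih =>
      by_cases h : n ≤ i + 1
      · rw [Nat.sub_eq_zero_of_le h]
        exact hK
      · push_neg at h
        have hj : n - i = (n - (i + 1)) + 1 := by omega
        rw [hj] at ih
        exact iterCommutator_ext_step K (n - (i + 1)) ih
          (iterCommutator_quot_upperFinite K hK (n - (i + 1)))
  rcases le_or_gt m n with hmn | hmn
  · have := main (n - m)
    rwa [Nat.sub_sub_self hmn] at this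
  · have hbot' : iterCommutator K m = ⊥ :=
      le_bot_iff.mp (hbot ▸ antitone_nat_of_succ_le (iterCommutator_succ_le K) hmn.le)
    rw [hbot']
    exact UpperFinite.of_finite
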